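/- Let G = (V,E) be a finite simple graph with m = |E| edges and d : E → ℝ₊. If there exists a positive semidefinite symmetric real V×V matrix B with B_{ii} + B_{jj} − 2B_{ij} = d_{ij}² for all {i,j} ∈ E, then there exists such a positive semidefinite matrix B̄ satisfying the same m equations with rank B̄ ≤ ⌊(√(8m+1) − 1)/2⌋. -/

import Mathlib

open Matrix

universe u

variable {V : Type u} [Fintype V] [DecidableEq V]

/-- Nonzero symmetric kernel element for the constraint map. -/
lemma exists_symm_kernel (G : SimpleGraph V) [DecidableRel G.Adj]
    {ι : Type u} [Fintype ι] [DecidableEq ι] (W : Matrix V ι ℝ)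
    (hcard : 2 * G.edgeFinset.card < Fintype.card ι * (Fintype.card ι + 1)) :
    ∃ S : Matrix ι ι ℝ, Sᵀ = S ∧ S ≠ 0 ∧ ∀ u v : V, G.Adj u v →
      (W * S * Wᵀ) u u + (W * S * Wᵀ) v v - ((W * S * Wᵀ) u v + (W * S * Wᵀ) v u) = 0 := by
  classical
  -- the symmetric matrix built from `c : Sym2 ι → ℝ`
  let symMat : (Sym2 ι → ℝ) →ₗ[ℝ] Matrix ι ι ℝ :=
    { toFun := fun c i j => c s(i, j)
      map_add' := fun _ _ => rfl
      map_smul' := fun _ _ => rfl }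
  let sandwich : Matrix ι ι ℝ →ₗ[ℝ] Matrix V V ℝ :=
    { toFun := fun X => W * X * Wᵀ
      map_add' := fun X Y => by
        show W * (X + Y) * Wᵀ = W * X * Wᵀ + W * Y * Wᵀ
        rw [Matrix.mul_add, Matrix.add_mul]
      map_smul' := fun r X => by
        simp [Matrix.mul_smul, Matrix.smul_mul] }
  let F : Matrix V V ℝ → Sym2 V → ℝ := fun X =>
    Sym2.lift ⟨fun u v => X u u + X v v - (X u v + X v u), fun u v => by ring⟩
  let evalEdges : Matrix V V ℝ →ₗ[ℝ] (↥G.edgeFinset → ℝ) :=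
    { toFun := fun X e => F X e.1
      map_add' := fun X Y => by
        funext e
        obtain ⟨e, he⟩ := e
        induction e with
        | _ u v => simp [F]; ring
      map_smul' := fun r X => by
        funext e
        obtain ⟨e, he⟩ := e
        induction e with
        | _ u v => simp [F]; ring }
  let Φ : (Sym2 ι → ℝ) →ₗ[ℝ] (↥G.edgeFinset → ℝ) := evalEdges ∘ₗ sandwich ∘ₗ symMat
  have hnotinj : ¬ Function.Injective Φ := by
    intro hinj
    have hle := LinearMap.finrank_le_finrank_of_injective hinj
    rw [Module.finrank_fintype_fun_eq_card, Module.finrank_fintype_fun_eq_card] at hle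
    rw [Sym2.card] at hle
    have hcardE : Fintype.card ↥G.edgeFinset = G.edgeFinset.card := Fintype.card_coe _
    rw [hcardE] at hle
    have hdvd : 2 ∣ (Fintype.card ι + 1) * Fintype.card ι := by
      rcases Nat.even_mul_succ_self (Fintype.card ι) with ⟨k, hk⟩
      exact ⟨k, by rw [Nat.mul_comm]; omega⟩
    have h2 : 2 * ((Fintype.card ι + 1).choose 2) = Fintype.card ι * (Fintype.card ι + 1) := by
      rw [Nat.choose_two_right, Nat.add_sub_cancel, Nat.mul_div_cancel' hdvd, Nat.mul_comm]
    omega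
  obtain ⟨x, y, hxy, hne⟩ := Function.not_injective_iff.mp hnotinj
  refine ⟨symMat (x - y), ?_, ?_, ?_⟩
  · ext i j
    show (x - y) s(j, i) = (x - y) s(i, j)
    rw [Sym2.eq_swap]
  · intro h0
    apply hne
    apply sub_eq_zero.mp
    funext e
    induction e with
    | _ i j => exact congrFun (congrFun h0 i) j
  · intro u v huv
    have he : s(u, v) ∈ G.edgeFinset := by
      rw [SimpleGraph.mem_edgeFinset]; exact huv
    have hΦ : Φ (x - y) = 0 := by
      rw [map_sub, hxy, sub_self]
    have := congrFun hΦ ⟨s(u, v), he⟩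
    simpa [Φ, evalEdges, sandwich, F] using this


/-- From a nonzero symmetric real matrix `S`, produce `N` with a zero column `i₀`
such that `N * Nᵀ = 1 + t • S` for some `t`. -/
lemma exists_reduction {ι : Type*} [Fintype ι] [DecidableEq ι]
    (S : Matrix ι ι ℝ) (hsymm : Sᵀ = S) (hS : S ≠ 0) :
    ∃ (N : Matrix ι ι ℝ) (i₀ : ι) (t : ℝ), N * Nᵀ = 1 + t • S ∧ ∀ j, N j i₀ = 0 := by
  classical
  have hH : S.IsHermitian := by
    rw [Matrix.IsHermitian, conjTranspose_eq_transpose_of_trivial, hsymm]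
  set ev := hH.eigenvalues with hev
  set U : Matrix ι ι ℝ := (hH.eigenvectorUnitary : Matrix ι ι ℝ) with hU
  have hspec : S = U * diagonal ev * Uᵀ := by
    have := hH.spectral_theorem
    rwa [Unitary.conjStarAlgAut_apply, RCLike.ofReal_real_eq_id, Function.id_comp, star_eq_conjTranspose,
      conjTranspose_eq_transpose_of_trivial] at this
  have hUUT : U * Uᵀ = 1 := by
    have := (Matrix.mem_unitaryGroup_iff).mp hH.eigenvectorUnitary.2
    rwa [star_eq_conjTranspose, conjTranspose_eq_transpose_of_trivial] at this
  -- a nonzero eigenvalue exists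
  have hex : ∃ i, ev i ≠ 0 := by
    by_contra h
    push_neg at h
    apply hS
    have : diagonal ev = 0 := by
      ext i j
      by_cases hij : i = j <;> simp [diagonal, hij, h]
    rw [hspec, this, mul_zero, zero_mul]
  obtain ⟨iw, hiw⟩ := hex
  haveI : Nonempty ι := ⟨iw⟩
  obtain ⟨i₀, -, hmax⟩ := Finset.exists_max_image Finset.univ (fun i => |ev i|)
    ⟨iw, Finset.mem_univ iw⟩
  have hmax' : ∀ i, |ev i| ≤ |ev i₀| := fun i => hmax i (Finset.mem_univ i)
  set μ := ev i₀ with hμ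
  have hμne : μ ≠ 0 := by
    intro h
    have h2 := hmax' iw
    rw [h, abs_zero] at h2
    exact hiw (abs_nonpos_iff.mp h2)
  set g : ι → ℝ := fun i => 1 - ev i / μ with hg
  have hg0 : ∀ i, 0 ≤ g i := by
    intro i
    have h1 : ev i / μ ≤ |ev i / μ| := le_abs_self _
    have h2 : |ev i / μ| ≤ 1 := by
      rw [abs_div]
      rw [div_le_one (abs_pos.mpr hμne)]
      exact hmax' i
    simp only [hg]
    linarith
  have hgi₀ : g i₀ = 0 := by simp [hg, ← hμ, div_self hμne]
  refine ⟨U * diagonal (fun i => Real.sqrt (g i)), i₀, -(1/μ), ?_, ?_⟩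
  · have hd : diagonal (fun i => Real.sqrt (g i)) * diagonal (fun i => Real.sqrt (g i))
        = diagonal g := by
      rw [diagonal_mul_diagonal]
      exact congrArg diagonal (funext fun i => Real.mul_self_sqrt (hg0 i))
    have h1 : (U * diagonal (fun i => Real.sqrt (g i))) *
        (U * diagonal (fun i => Real.sqrt (g i)))ᵀ = U * diagonal g * Uᵀ := by
      rw [transpose_mul, diagonal_transpose, Matrix.mul_assoc U,
        ← Matrix.mul_assoc (diagonal _) (diagonal _), hd, ← Matrix.mul_assoc]
    rw [h1]
    have h2 : diagonal g = 1 + (-(1/μ)) • diagonal ev := by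
      ext i j
      by_cases hij : i = j
      · subst hij
        simp [hg, diagonal_apply_eq, Matrix.one_apply_eq]
        ring
      · simp [diagonal_apply_ne _ hij, Matrix.one_apply_ne hij]
    rw [h2, Matrix.mul_add, Matrix.add_mul, Matrix.mul_one, hUUT, Matrix.mul_smul,
      Matrix.smul_mul, ← hspec]
  · intro j
    rw [mul_diagonal]
    simp [hgi₀]

lemma barvinok_aux {V : Type u} [Fintype V] [DecidableEq V] (G : SimpleGraph V)
    [DecidableRel G.Adj] (d : V → V → ℝ) (r : ℕ) :
    ∀ (ι : Type u) [Fintype ι] [DecidableEq ι], Fintype.card ι = r →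
    ∀ W : Matrix V ι ℝ,
      (∀ u v, G.Adj u v → (W * Wᵀ) u u + (W * Wᵀ) v v - 2 * (W * Wᵀ) u v = d u v ^ 2) →
      ∃ B' : Matrix V V ℝ, B'.PosSemidef ∧
        (∀ u v, G.Adj u v → B' u u + B' v v - 2 * B' u v = d u v ^ 2) ∧
        B'.rank * (B'.rank + 1) ≤ 2 * G.edgeFinset.card := by
  induction r using Nat.strong_induction_on with
  | _ r IH =>
  intro ι _ _ hcard W hW
  by_cases hle : r * (r + 1) ≤ 2 * G.edgeFinset.card
  · refine ⟨W * Wᵀ, ?_, hW, ?_⟩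
    · have := Matrix.posSemidef_self_mul_conjTranspose W
      rwa [conjTranspose_eq_transpose_of_trivial] at this
    · have h1 : (W * Wᵀ).rank ≤ r := by
        calc (W * Wᵀ).rank ≤ W.rank := Matrix.rank_mul_le_left W Wᵀ
        _ ≤ Fintype.card ι := Matrix.rank_le_card_width W
        _ = r := hcard
      exact le_trans (Nat.mul_le_mul h1 (Nat.succ_le_succ h1)) hle
  · push_neg at hle
    obtain ⟨S, hsymm, hSne, hker⟩ := exists_symm_kernel G W (hcard ▸ hle)
    obtain ⟨N, i₀, t, hNN, hNcol⟩ := exists_reduction S hsymm hSne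
    set W' := W * N with hW'
    have hW'col : ∀ v, W' v i₀ = 0 := by
      intro v
      rw [hW']
      rw [Matrix.mul_apply]
      simp [hNcol]
    have hprod : W' * W'ᵀ = W * Wᵀ + t • (W * S * Wᵀ) := by
      rw [hW', transpose_mul, Matrix.mul_assoc W N, ← Matrix.mul_assoc N Nᵀ, hNN,
        Matrix.add_mul, Matrix.one_mul, Matrix.smul_mul, Matrix.mul_add, Matrix.mul_smul,
        ← Matrix.mul_assoc]
    have hXsymm : (W * S * Wᵀ)ᵀ = W * S * Wᵀ := by
      rw [transpose_mul, transpose_mul, transpose_transpose, hsymm, Matrix.mul_assoc]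
    have hfeas' : ∀ u v, G.Adj u v →
        (W' * W'ᵀ) u u + (W' * W'ᵀ) v v - 2 * (W' * W'ᵀ) u v = d u v ^ 2 := by
      intro u v huv
      have h0 := hker u v huv
      have hvu : (W * S * Wᵀ) v u = (W * S * Wᵀ) u v := by
        simpa [Matrix.transpose_apply] using (congrFun (congrFun hXsymm v) u).symm
      rw [hprod]
      simp only [Matrix.add_apply, Matrix.smul_apply, smul_eq_mul]
      linear_combination hW u v huv + t * h0 + t * hvu
    let ι' := {i : ι // ¬ i = i₀}
    have hcard' : Fintype.card ι' = r - 1 := by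
      have h := Fintype.card_subtype_compl (fun i => i = i₀)
      rw [Fintype.card_subtype_eq] at h
      show Fintype.card {i : ι // ¬ i = i₀} = r - 1
      rw [h, hcard]
    set W'' : Matrix V ι' ℝ := Matrix.of (fun v i => W' v i.1) with hW''
    have hcomp : W'' * W''ᵀ = W' * W'ᵀ := by
      ext u v
      rw [Matrix.mul_apply, Matrix.mul_apply]
      have hterm : ∀ i : ι', W'' u i * W''ᵀ i v = W' u i.1 * W' v i.1 := fun i => rfl
      rw [Finset.sum_congr rfl fun i _ => hterm i]
      calc ∑ i : ι', W' u i.1 * W' v i.1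
          = ∑ i ∈ Finset.univ.erase i₀, W' u i * W' v i :=
            (Finset.sum_subtype (Finset.univ.erase i₀) (p := fun i => ¬ i = i₀)
              (fun x => by simp [Finset.mem_erase]) (fun i => W' u i * W' v i)).symm
        _ = ∑ i : ι, W' u i * W' v i :=
            Finset.sum_erase _ (by rw [hW'col u, zero_mul])
    have hrne : r ≠ 0 := by
      rintro rfl
      rw [Nat.zero_mul] at hle
      exact Nat.not_lt_zero _ hle
    exact IH (r - 1) (by omega) ι' hcard' W''
      (fun u v huv => by rw [hcomp]; exact hfeas' u v huv)

theorem barvinok_low_rank_solution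
    (V : Type*) [Fintype V] [DecidableEq V] (G : SimpleGraph V)
    [DecidableRel G.Adj] (m : ℕ) (hm : m = G.edgeFinset.card)
    (d : V → V → ℝ) (hd : ∀ u v, 0 ≤ d u v)
    (B : Matrix V V ℝ) (hB : B.PosSemidef)
    (hfeas : ∀ u v, G.Adj u v → B u u + B v v - 2 * B u v = d u v ^ 2) :
    ∃ B' : Matrix V V ℝ, B'.PosSemidef ∧
      (∀ u v, G.Adj u v → B' u u + B' v v - 2 * B' u v = d u v ^ 2) ∧
      B'.rank ≤ ⌊(Real.sqrt (8 * m + 1) - 1) / 2⌋₊ := by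
  classical
  obtain ⟨Y, hY⟩ : ∃ Y : Matrix V V ℝ, B = Yᴴ * Y := by
    open scoped MatrixOrder in
    obtain ⟨Y, hY⟩ := CStarAlgebra.nonneg_iff_eq_star_mul_self.mp hB.nonneg
    exact ⟨Y, by rw [hY, star_eq_conjTranspose]⟩
  have hBW : B = Yᵀ * Yᵀᵀ := by
    rw [hY, conjTranspose_eq_transpose_of_trivial, transpose_transpose]
  obtain ⟨B', hpsd, hfeas', hrank⟩ := barvinok_aux G d (Fintype.card V) V rfl Yᵀ
    (fun u v huv => by rw [← hBW]; exact hfeas u v huv)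
  refine ⟨B', hpsd, hfeas', ?_⟩
  rw [← hm] at hrank
  set k := B'.rank with hk
  apply Nat.le_floor
  have h1 : ((2 * k + 1 : ℕ) : ℝ) ≤ Real.sqrt (8 * m + 1) := by
    rw [show ((2 * k + 1 : ℕ) : ℝ) = 2 * (k : ℝ) + 1 by push_cast; ring]
    rw [Real.le_sqrt (by positivity) (by positivity)]
    have : (k * (k + 1) : ℕ) ≤ (2 * m : ℕ) := hrank
    have hc : ((k * (k + 1) : ℕ) : ℝ) ≤ ((2 * m : ℕ) : ℝ) := Nat.cast_le.mpr this
    push_cast at hc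
    nlinarith [hc]
  have h2 : ((2 * k + 1 : ℕ) : ℝ) = 2 * (k : ℝ) + 1 := by push_cast; ring
  rw [h2] at h1
  linarith
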